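/- Let H be a real Hilbert space, f : H → ℝ ∪ {+∞} a proper closed convex function, and S_f ⊆ ℝ × H a closed convex set such that f(x) = sup_{(a,v) ∈ S_f} (a + ⟨v, x⟩) for all x ∈ H. Then for every ε ≥ 0 and every x in the effective domain of f, the ε-subdifferential satisfies ∂_ε f(x) = { v ∈ H : ∃ a ∈ ℝ, (a, v) ∈ S_f and a + ⟨v, x⟩ ≥ f(x) − ε }. -/

import Mathlib

open Filter Topology

private lemma ereal_sub_le_of_le_add {a : EReal} (h : a ≠ ⊥) {r s : ℝ}
    (hle : (r : EReal) ≤ a + (s : EReal)) : ((r - s : ℝ) : EReal) ≤ a := by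
  induction a using EReal.rec with
  | bot => exact absurd rfl h
  | coe b => norm_cast at hle ⊢; linarith
  | top => exact le_top

/-- characterization of the ε-subdifferential via an affine support set. -/
theorem eps_subdiff_eq_affine_support
    {H : Type*} [NormedAddCommGroup H] [InnerProductSpace ℝ H] [CompleteSpace H]
    (f : H → EReal) (S : Set (ℝ × H))
    (hproper_top : ∃ x, f x ≠ ⊤) (hproper_bot : ∀ x, f x ≠ ⊥)
    (hlsc : LowerSemicontinuous f)
    (hconv : Convex ℝ {p : H × ℝ | f p.1 ≤ (p.2 : EReal)})
    (hSclosed : IsClosed S) (hSconv : Convex ℝ S)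
    (hrep : ∀ x, f x = ⨆ p ∈ S, ((p.1 + inner ℝ p.2 x : ℝ) : EReal))
    (ε : ℝ) (hε : 0 ≤ ε) (x : H) (hx : f x ≠ ⊤) :
    {v : H | ∀ y, f x + ((inner ℝ v (y - x) : ℝ) : EReal) ≤ f y + (ε : EReal)}
      = {v : H | ∃ a : ℝ, (a, v) ∈ S ∧ f x ≤ ((a + inner ℝ v x + ε : ℝ) : EReal)} := by
  have keyR : ∀ (e : EReal), e ≠ ⊥ → e ≠ ⊤ → ∃ r : ℝ, e = (r : EReal) := by
    intro e h1 h2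
    induction e using EReal.rec with
    | bot => simp at h1
    | coe r => exact ⟨r, rfl⟩
    | top => simp at h2
  obtain ⟨fx, hfx⟩ := keyR (f x) (hproper_bot x) hx
  have hSne : S.Nonempty := by
    rcases Set.eq_empty_or_nonempty S with h | h
    · exfalso
      have h1 := hrep x
      rw [h] at h1
      simp at h1
      exact hproper_bot x h1
    · exact h
  have hSx : ∀ p ∈ S, p.1 + (inner ℝ p.2 x : ℝ) ≤ fx := by
    intro p hp
    have h := le_biSup (fun p : ℝ × H => ((p.1 + inner ℝ p.2 x : ℝ) : EReal)) hp
    rw [← hrep x, hfx] at h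
    exact_mod_cast show ((p.1 + inner ℝ p.2 x : ℝ) : EReal) ≤ (fx : EReal) from h
  ext v
  simp only [Set.mem_setOf_eq]
  constructor
  · -- hard direction
    intro hv
    set c : ℝ := inner ℝ v x + ε - fx with hc
    have hminor : ∀ y : H, ((inner ℝ v y - c : ℝ) : EReal) ≤ f y := by
      intro y
      have h1 := hv y
      rw [hfx] at h1
      have h2 : ((fx + inner ℝ v (y - x) : ℝ) : EReal) ≤ f y + (ε : EReal) := by
        push_cast
        exact h1
      have h3 := ereal_sub_le_of_le_add (hproper_bot y) h2
      have h4 : (inner ℝ v y : ℝ) - c = fx + inner ℝ v (y - x) - ε := by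
        rw [inner_sub_right, hc]; ring
      rw [h4]
      exact h3
    set U : Set (H × ℝ) := {p | ∃ a : ℝ, (a, p.1) ∈ S ∧ -a ≤ p.2} with hUdef
    have hUclosed : IsClosed U := by
      apply IsSeqClosed.isClosed
      intro p q hp hq
      choose a haS hat using hp
      have hq1 : Tendsto (fun n => (p n).1) atTop (𝓝 q.1) := (continuous_fst.tendsto q).comp hq
      have hq2 : Tendsto (fun n => (p n).2) atTop (𝓝 q.2) := (continuous_snd.tendsto q).comp hq
      have hub : Tendsto (fun n => fx - (inner ℝ (p n).1 x : ℝ)) atTop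
          (𝓝 (fx - (inner ℝ q.1 x : ℝ))) :=
        tendsto_const_nhds.sub (hq1.inner tendsto_const_nhds)
      have hlb : Tendsto (fun n => -(p n).2) atTop (𝓝 (-q.2)) := hq2.neg
      obtain ⟨M, hM⟩ := hub.bddAbove_range
      obtain ⟨m, hm⟩ := hlb.bddBelow_range
      have hmem : ∀ n, a n ∈ Set.Icc m M := by
        intro n
        have h1 := hSx _ (haS n)
        have h2 := hM (Set.mem_range_self n)
        have h3 := hm (Set.mem_range_self n)
        have h4 := hat n
        constructor
        · linarith
        · linarith
      obtain ⟨a₀, _, φ, hφ, hconv'⟩ := (isCompact_Icc).tendsto_subseq hmem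
      have hT : Tendsto (fun n => ((a ∘ φ) n, (p (φ n)).1)) atTop (𝓝 (a₀, q.1)) :=
        hconv'.prodMk_nhds (hq1.comp hφ.tendsto_atTop)
      have hmemS : (a₀, q.1) ∈ S :=
        hSclosed.mem_of_tendsto hT (Filter.Eventually.of_forall (fun n => haS (φ n)))
      refine ⟨a₀, hmemS, ?_⟩
      have hT2 : Tendsto (fun n => -(a ∘ φ) n) atTop (𝓝 (-a₀)) := hconv'.neg
      exact le_of_tendsto_of_tendsto' hT2 (hq2.comp hφ.tendsto_atTop) (fun n => hat (φ n))
    have hUconv : Convex ℝ U := by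
      rintro ⟨w₁, t₁⟩ ⟨a₁, h₁, ha₁⟩ ⟨w₂, t₂⟩ ⟨a₂, h₂, ha₂⟩ α β hα hβ hαβ
      refine ⟨α * a₁ + β * a₂, ?_, ?_⟩
      · have h := hSconv h₁ h₂ hα hβ hαβ
        simpa [Prod.smul_mk, Prod.mk_add_mk, smul_eq_mul] using h
      · have e1 := mul_le_mul_of_nonneg_left ha₁ hα
        have e2 := mul_le_mul_of_nonneg_left ha₂ hβ
        simp only [Prod.smul_mk, Prod.mk_add_mk, smul_eq_mul]
        linarith
    have hkey : (v, c) ∈ U := by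
      by_contra hvc
      obtain ⟨g, u, hgU, hgv⟩ := geometric_hahn_banach_closed_point hUconv hUclosed hvc
      set s : ℝ := g (0, 1) with hs
      set z : H := (InnerProductSpace.toDual ℝ H).symm (g.comp (ContinuousLinearMap.inl ℝ H ℝ))
        with hz
      have hgdecomp : ∀ (w : H) (t : ℝ), g (w, t) = (inner ℝ z w : ℝ) + t * s := by
        intro w t
        have h1 : (inner ℝ z w : ℝ) = g (w, 0) := by
          rw [hz]
          exact InnerProductSpace.toDual_symm_apply
        have h2 : (w, t) = ((w, (0:ℝ)) + t • ((0:H), (1:ℝ))) := by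
          simp
        rw [h2, map_add, map_smul, ← h1, smul_eq_mul, ← hs]
      have hsle : s ≤ 0 := by
        obtain ⟨p0, hp0⟩ := hSne
        by_contra hs0
        push_neg at hs0
        have hn : ∀ n : ℕ, (inner ℝ z p0.2 : ℝ) + (-p0.1 + n) * s < u := by
          intro n
          have hU1 : (p0.2, -p0.1 + n) ∈ U := ⟨p0.1, by simpa using hp0,
            by show -p0.1 ≤ -p0.1 + (n:ℝ); simp⟩
          have h := hgU _ hU1
          rwa [hgdecomp] at h
        obtain ⟨n, hn'⟩ := exists_nat_gt ((u - (inner ℝ z p0.2 : ℝ)) / s + p0.1)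
        have h4 : (u - (inner ℝ z p0.2 : ℝ)) / s < -p0.1 + n := by linarith
        have h5 : u - (inner ℝ z p0.2 : ℝ) < (-p0.1 + n) * s := (div_lt_iff₀ hs0).mp h4
        have h6 := hn n
        linarith
      rcases lt_or_eq_of_le hsle with hslt | hseq
      · -- s < 0
        set t : ℝ := -(1 / s) with htdef
        have ht : 0 < t := by
          rw [htdef]
          have : 1 / s < 0 := div_neg_of_pos_of_neg one_pos hslt
          linarith
        have hts : t * s = -1 := by
          have hsne : s ≠ 0 := hslt.ne
          rw [htdef]
          field_simp
        set y₀ : H := t • z with hy₀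
        have hub : ∀ p ∈ S, (p.1 + (inner ℝ p.2 y₀ : ℝ)) ≤ t * u := by
          intro p hp
          have hU1 : (p.2, -p.1) ∈ U := ⟨p.1, by simpa using hp, le_refl _⟩
          have h1 := hgU _ hU1
          rw [hgdecomp] at h1
          have hinner : (inner ℝ p.2 y₀ : ℝ) = t * (inner ℝ z p.2 : ℝ) := by
            rw [hy₀, real_inner_smul_right, real_inner_comm]
          rw [hinner]
          have h4 := mul_lt_mul_of_pos_left h1 ht
          have h5 : t * ((inner ℝ z p.2 : ℝ) + -p.1 * s) = t * (inner ℝ z p.2 : ℝ) + p.1 := by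
            rw [mul_add, show t * (-p.1 * s) = -p.1 * (t * s) by ring, hts]; ring
          linarith
        have hfy : f y₀ ≤ ((t * u : ℝ) : EReal) := by
          rw [hrep y₀]
          refine iSup₂_le fun p hp => ?_
          exact EReal.coe_le_coe_iff.mpr (hub p hp)
        have h2 := hminor y₀
        have h3 : (inner ℝ v y₀ : ℝ) - c ≤ t * u := by
          have h := le_trans h2 hfy
          exact_mod_cast h
        rw [hgdecomp] at hgv
        have hinner2 : (inner ℝ v y₀ : ℝ) = t * (inner ℝ z v : ℝ) := by
          rw [hy₀, real_inner_smul_right, real_inner_comm]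
        rw [hinner2] at h3
        have h4 : t * u < t * ((inner ℝ z v : ℝ) + c * s) := mul_lt_mul_of_pos_left hgv ht
        have h5 : t * ((inner ℝ z v : ℝ) + c * s) = t * (inner ℝ z v : ℝ) - c := by
          rw [mul_add, show t * (c * s) = c * (t * s) by ring, hts]; ring
        linarith
      · -- s = 0
        rw [hgdecomp] at hgv
        rw [hseq] at hgv
        simp only [zero_mul, mul_zero, add_zero] at hgv
        have hd : (0:ℝ) < (inner ℝ z v : ℝ) - u := by linarith
        set lam : ℝ := (ε + 1) / ((inner ℝ z v : ℝ) - u) with hlam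
        have hlampos : 0 < lam := div_pos (by linarith) hd
        have h5 : lam * ((inner ℝ z v : ℝ) - u) = ε + 1 := by
          rw [hlam, div_mul_cancel₀ _ hd.ne']
        set y₁ : H := x + lam • z with hy₁
        have hfy : f y₁ ≤ ((fx + lam * u : ℝ) : EReal) := by
          rw [hrep y₁]
          refine iSup₂_le fun p hp => ?_
          rw [EReal.coe_le_coe_iff]
          have h1 := hSx p hp
          have h2 : (inner ℝ z p.2 : ℝ) < u := by
            have hU1 : (p.2, -p.1) ∈ U := ⟨p.1, by simpa using hp, le_refl _⟩
            have h := hgU _ hU1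
            rw [hgdecomp] at h
            rw [hseq] at h
            simpa using h
          have h3 : (inner ℝ p.2 y₁ : ℝ) = (inner ℝ p.2 x : ℝ) + lam * (inner ℝ z p.2 : ℝ) := by
            rw [hy₁, inner_add_right, real_inner_smul_right, real_inner_comm p.2 z]
          rw [h3]
          nlinarith [mul_lt_mul_of_pos_left h2 hlampos]
        have h2 := hminor y₁
        have h3 : (inner ℝ v y₁ : ℝ) - c ≤ fx + lam * u := by
          have h := le_trans h2 hfy
          exact_mod_cast h
        have h4 : (inner ℝ v y₁ : ℝ) = (inner ℝ v x : ℝ) + lam * (inner ℝ z v : ℝ) := by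
          rw [hy₁, inner_add_right, real_inner_smul_right, real_inner_comm v z]
        rw [h4, hc] at h3
        nlinarith
    obtain ⟨a, haS, hac⟩ := hkey
    refine ⟨a, haS, ?_⟩
    rw [hfx, EReal.coe_le_coe_iff]
    simp only at hac
    rw [hc] at hac
    linarith
  · -- easy direction
    rintro ⟨a, haS, hax⟩ y
    have h1 : ((a + inner ℝ v y : ℝ) : EReal) ≤ f y := by
      have h := le_biSup (fun p : ℝ × H => ((p.1 + inner ℝ p.2 y : ℝ) : EReal)) haS
      rw [← hrep y] at h
      exact h
    calc f x + ((inner ℝ v (y - x) : ℝ) : EReal)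
        ≤ ((a + inner ℝ v x + ε : ℝ) : EReal) + ((inner ℝ v (y - x) : ℝ) : EReal) :=
          add_le_add_left hax _
      _ = ((a + inner ℝ v y : ℝ) : EReal) + (ε : EReal) := by
          rw [← EReal.coe_add, ← EReal.coe_add]
          norm_cast
          rw [inner_sub_right]; ring
      _ ≤ f y + (ε : EReal) := add_le_add_left h1 _
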